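/- Let μ ∈ V and let ν ∈ V/W be such that pr(μ) − ν lies in the image pr(C_Γ) of the positive cone. Then: (i) there exist unique nonnegative rational coefficients (c_γ)_{γ ∈ Γ∖Γ_M} with pr(μ) − Σ_{γ ∈ Γ∖Γ_M} c_γ · pr(e_γ) = ν; and (ii) setting μ_ν := μ − Σ_{γ ∈ Γ∖Γ_M} c_γ e_γ, for every λ ∈ V one has: (λ ≤ μ and pr(λ) = ν) if and only if λ ≤_{Γ_M} μ_ν. (This is the combinatorial identity (1.34) of the paper, describing the Harder–Narasimhan truncation of a fixed degree component: λ ≤^{G^ad} μ and pr_P^{ad}(λ) = ν ⟺ λ ≤^{M̄} μ_ν.) -/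
import Mathlib

lemma key_aux {V : Type*} [AddCommGroup V] [Module ℚ V]
    {Γ : Type*} [Fintype Γ] (e : Γ → V) (he : LinearIndependent ℚ e)
    (ΓM : Set Γ) (a : Γ → ℚ)
    (h : ∑ γ, a γ • e γ ∈ Submodule.span ℚ (e '' ΓM)) : ∀ γ ∉ ΓM, a γ = 0 := by
  obtain ⟨l, hl, hle⟩ := (Finsupp.mem_span_image_iff_linearCombination ℚ).1 h
  have hle' : ∑ γ, l γ • e γ = ∑ γ, a γ • e γ := by
    rw [← hle, Finsupp.linearCombination_apply, Finsupp.sum_fintype]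
    simp
  have h0 : ∑ γ, (a γ - l γ) • e γ = 0 := by
    simp [sub_smul, Finset.sum_sub_distrib, hle']
  have := linearIndependent_iff'.1 he Finset.univ (fun γ => a γ - l γ) h0
  intro γ hγ
  have h1 : a γ - l γ = 0 := this γ (Finset.mem_univ γ)
  have h2 : l γ = 0 := by
    by_contra h2
    exact hγ (hl (Finsupp.mem_support_iff.2 h2))
  linarith

lemma pr_zero {V : Type*} [AddCommGroup V] [Module ℚ V]
    {Γ : Type*} [Fintype Γ] (e : Γ → V) (ΓM : Set Γ) (b : Γ → ℚ)
    (hb : ∀ γ ∉ ΓM, b γ = 0) :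
    ∑ γ, b γ • e γ ∈ Submodule.span ℚ (e '' ΓM) := by
  refine Submodule.sum_mem _ fun γ _ => ?_
  by_cases h : γ ∈ ΓM
  · exact Submodule.smul_mem _ _ (Submodule.subset_span ⟨γ, h, rfl⟩)
  · simp [hb γ h]

/-- Combinatorial identity (1.34): given `μ` and `ν` in the quotient with
`pr(μ) - ν` in the image of the positive cone, there are unique nonnegative
coefficients `c` supported outside `Γ_M` with `pr(μ) - ∑ c_γ pr(e_γ) = ν`, and
for `μ_ν := μ - ∑ c_γ e_γ` one has, for every `λ`:
`λ ≤ μ` and `pr(λ) = ν` iff `λ ≤_{Γ_M} μ_ν`. -/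
theorem stmt1 {V : Type*} [AddCommGroup V] [Module ℚ V]
    {Γ : Type*} [Fintype Γ] (e : Γ → V) (he : LinearIndependent ℚ e)
    (ΓM : Set Γ) (mu : V) (nu : V ⧸ Submodule.span ℚ (e '' ΓM))
    (hnu : ∃ d : Γ → ℚ, (∀ γ, 0 ≤ d γ) ∧
      (Submodule.span ℚ (e '' ΓM)).mkQ mu - nu
        = (Submodule.span ℚ (e '' ΓM)).mkQ (∑ γ, d γ • e γ)) :
    (∃! c : Γ → ℚ, (∀ γ, 0 ≤ c γ) ∧ (∀ γ ∈ ΓM, c γ = 0) ∧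
        (Submodule.span ℚ (e '' ΓM)).mkQ mu
          - ∑ γ, c γ • (Submodule.span ℚ (e '' ΓM)).mkQ (e γ) = nu) ∧
    (∀ c : Γ → ℚ,
      ((∀ γ, 0 ≤ c γ) ∧ (∀ γ ∈ ΓM, c γ = 0) ∧
        (Submodule.span ℚ (e '' ΓM)).mkQ mu
          - ∑ γ, c γ • (Submodule.span ℚ (e '' ΓM)).mkQ (e γ) = nu) →
      ∀ lam : V,
        ((∃ b : Γ → ℚ, (∀ γ, 0 ≤ b γ) ∧ mu - lam = ∑ γ, b γ • e γ) ∧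
          (Submodule.span ℚ (e '' ΓM)).mkQ lam = nu) ↔
        (∃ b : Γ → ℚ, (∀ γ, 0 ≤ b γ) ∧ (∀ γ ∉ ΓM, b γ = 0) ∧
          (mu - ∑ γ, c γ • e γ) - lam = ∑ γ, b γ • e γ)) := by
  classical
  have hsum : ∀ a : Γ → ℚ, ∑ γ, a γ • (Submodule.span ℚ (e '' ΓM)).mkQ (e γ)
      = (Submodule.span ℚ (e '' ΓM)).mkQ (∑ γ, a γ • e γ) := by
    intro a
    rw [map_sum]
    simp
  have hmkQzero : ∀ x : V, (Submodule.span ℚ (e '' ΓM)).mkQ x = 0 ↔ x ∈ Submodule.span ℚ (e '' ΓM) :=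
    fun x => Submodule.Quotient.mk_eq_zero _
  have hez : ∀ γ ∈ ΓM, (Submodule.span ℚ (e '' ΓM)).mkQ (e γ) = 0 := fun γ h =>
    (hmkQzero _).2 (Submodule.subset_span ⟨γ, h, rfl⟩)
  constructor
  · obtain ⟨d, hd0, hd⟩ := hnu
    have key : ∀ γ, (if γ ∈ ΓM then 0 else d γ) • (Submodule.span ℚ (e '' ΓM)).mkQ (e γ)
        = d γ • (Submodule.span ℚ (e '' ΓM)).mkQ (e γ) := by
      intro γ
      by_cases h : γ ∈ ΓM
      · simp [h, hez γ h]
      · simp [h]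
    have edsum : ∑ γ, (if γ ∈ ΓM then 0 else d γ) • (Submodule.span ℚ (e '' ΓM)).mkQ (e γ)
        = (Submodule.span ℚ (e '' ΓM)).mkQ mu - nu := by
      rw [Finset.sum_congr rfl (fun γ _ => key γ), hsum, ← hd]
    refine ⟨fun γ => if γ ∈ ΓM then 0 else d γ, ⟨?_, ?_, ?_⟩, ?_⟩
    · intro γ; by_cases h : γ ∈ ΓM <;> simp [h, hd0 γ]
    · intro γ hγ; simp [hγ]
    · rw [edsum]; abel
    · intro c' ⟨hc'0, hc'M, hc'⟩
      have e1 : ∑ γ, c' γ • (Submodule.span ℚ (e '' ΓM)).mkQ (e γ)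
          = (Submodule.span ℚ (e '' ΓM)).mkQ mu - nu := by
        rw [← hc']; abel
      have heq : ∑ γ, (c' γ - if γ ∈ ΓM then 0 else d γ) • e γ ∈ Submodule.span ℚ (e '' ΓM) := by
        rw [← hmkQzero, ← hsum]
        simp only [sub_smul, Finset.sum_sub_distrib, e1, edsum]
        abel
      have key2 := key_aux e he ΓM _ heq
      funext γ
      by_cases h : γ ∈ ΓM
      · simp [h, hc'M γ h]
      · have := key2 γ h
        simp only [if_neg h] at this ⊢
        linarith
  · intro c ⟨hc0, hcM, hc⟩ lam
    have hcmu : (Submodule.span ℚ (e '' ΓM)).mkQ (∑ γ, c γ • e γ)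
        = (Submodule.span ℚ (e '' ΓM)).mkQ mu - nu := by
      rw [← hsum, ← hc]; abel
    constructor
    · rintro ⟨⟨b, hb0, hb⟩, hlam⟩
      have hmem : ∑ γ, (b γ - c γ) • e γ ∈ Submodule.span ℚ (e '' ΓM) := by
        rw [← hmkQzero]
        simp only [sub_smul, Finset.sum_sub_distrib, map_sub]
        rw [← hb, hcmu, map_sub, hlam]
        abel
      have hbez := key_aux e he ΓM _ hmem
      refine ⟨fun γ => b γ - c γ, fun γ => ?_, hbez, ?_⟩
      · by_cases h : γ ∈ ΓM
        · have h1 := hcM γ h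
          have h2 := hb0 γ
          simp only [h1]
          linarith
        · simp only [hbez γ h]; exact le_refl 0
      · simp only [sub_smul, Finset.sum_sub_distrib]
        rw [← hb]
        abel
    · rintro ⟨b, hb0, hbM, hb⟩
      constructor
      · refine ⟨fun γ => c γ + b γ, fun γ => add_nonneg (hc0 γ) (hb0 γ), ?_⟩
        simp only [add_smul, Finset.sum_add_distrib]
        have h3 : mu - lam = (mu - ∑ γ, c γ • e γ - lam) + ∑ γ, c γ • e γ := by abel
        rw [h3, hb]
        abel
      · have h1 : (Submodule.span ℚ (e '' ΓM)).mkQ (∑ γ, b γ • e γ) = 0 :=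
          (hmkQzero _).2 (pr_zero e ΓM b hbM)
        have h4 : lam = mu - ∑ γ, c γ • e γ - ∑ γ, b γ • e γ := by
          rw [← hb]; abel
        rw [h4, map_sub, map_sub, hcmu, h1]
        abel
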